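/- Let a = (a_n) ∈ ℓ¹(ℕ). If Σ_n a_n x_n = 0 for every x = (x_n) ∈ ℓ²(ℕ) satisfying Σ_n x_n / n = 0, then a = 0. -/

import Mathlib

/-- If `a ∈ ℓ¹(ℕ)` annihilates every `x ∈ ℓ²(ℕ)` with `∑ₙ xₙ/n = 0`
(sequences indexed by `n ≥ 1`, written here as `n+1` for `n : ℕ`), then `a = 0`. -/
theorem stmt5 (a : lp (fun _ : ℕ => ℂ) 1)
    (h : ∀ x : lp (fun _ : ℕ => ℂ) 2,
      (∑' n : ℕ, x n / ((n : ℂ) + 1)) = 0 → (∑' n : ℕ, a n * x n) = 0) :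
    a = 0 := by
  -- Step 1: a i * (i+1) = a 0 for all i
  have key : ∀ i : ℕ, a i * ((i : ℂ) + 1) = a 0 := by
    intro i
    rcases eq_or_ne i 0 with rfl | hi
    · simp
    · set x : lp (fun _ : ℕ => ℂ) 2 :=
        lp.single 2 i ((i : ℂ) + 1) - lp.single 2 0 1 with hx
    -- coordinates of x
      have hxc : ∀ n : ℕ, x n = (if n = i then ((i : ℂ) + 1) else 0) -
          (if n = 0 then 1 else 0) := by
        intro n
        rw [hx]
        simp only [lp.coeFn_sub, Pi.sub_apply, lp.single_apply]
        by_cases h1 : n = i <;> by_cases h2 : n = 0 <;> simp [h1, h2, Pi.single_apply]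
      have hxsum : (∑' n : ℕ, x n / ((n : ℂ) + 1)) = 0 := by
        have hvan : ∀ n ∉ ({0, i} : Finset ℕ), x n / ((n : ℂ) + 1) = 0 := by
          intro n hn
          simp only [Finset.mem_insert, Finset.mem_singleton, not_or] at hn
          rw [hxc]
          simp [hn.1, hn.2]
        rw [tsum_eq_sum hvan, Finset.sum_insert (by simpa using Ne.symm hi)]
        have hni : ((i : ℂ) + 1) ≠ 0 := Nat.cast_add_one_ne_zero i
        simp [hxc, hi, Ne.symm hi, div_self hni]
      have := h x hxsum
      have hvan : ∀ n ∉ ({0, i} : Finset ℕ), a n * x n = 0 := by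
        intro n hn
        simp only [Finset.mem_insert, Finset.mem_singleton, not_or] at hn
        rw [hxc]; simp [hn.1, hn.2]
      rw [tsum_eq_sum hvan, Finset.sum_insert (by simpa using Ne.symm hi)] at this
      simp only [Finset.sum_singleton, hxc, if_pos rfl, hi, if_neg hi] at this
      simp only [Ne.symm hi, if_false, if_true] at this
      linear_combination this
  -- Step 2: if a 0 ≠ 0 this contradicts summability
  have ha0 : a 0 = 0 := by
    by_contra h0
    have hsum : Summable (fun n : ℕ => ‖a n‖ ^ (1 : ENNReal).toReal) :=
      (lp.memℓp a).summable (by norm_num)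
    simp only [ENNReal.toReal_one, Real.rpow_one] at hsum
    have hnorm : ∀ n : ℕ, ‖a n‖ = ‖a 0‖ / (n + 1) := by
      intro n
      have hk := key n
      have hni : ((n : ℂ) + 1) ≠ 0 := Nat.cast_add_one_ne_zero n
      have han : a n = a 0 / ((n : ℂ) + 1) := by
        field_simp at hk ⊢; linear_combination hk
      rw [han, norm_div]
      congr 1
      rw [show ((n : ℂ) + 1) = ((n + 1 : ℕ) : ℂ) by push_cast; ring, Complex.norm_natCast]
      push_cast; ring
    have hsum2 : Summable (fun n : ℕ => ‖a 0‖ / (n + 1 : ℝ)) := by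
      apply hsum.congr
      intro n; rw [hnorm n]
    have hA : ‖a 0‖ ≠ 0 := norm_ne_zero_iff.mpr h0
    have hsum3 : Summable (fun n : ℕ => 1 / (n + 1 : ℝ)) := by
      have h' := hsum2.mul_left (‖a 0‖)⁻¹
      apply h'.congr
      intro n
      have hp : ((n : ℝ) + 1) ≠ 0 := by positivity
      field_simp
    have hs4 : Summable (fun n : ℕ => 1 / (((n + 1 : ℕ)) : ℝ)) :=
      hsum3.congr fun n => by push_cast; ring
    exact Real.not_summable_one_div_natCast
      ((summable_nat_add_iff 1).mp hs4)
  -- Step 3: conclude a = 0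
  refine lp.ext (funext fun n => ?_)
  have := key n
  have hni : ((n : ℂ) + 1) ≠ 0 := Nat.cast_add_one_ne_zero n
  rw [ha0] at this
  have : a n = 0 := by
    rcases mul_eq_zero.mp this with h' | h'
    · exact h'
    · exact absurd h' hni
  simpa using this
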